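/- Let K > 0 be a natural number and x₀, x₁, r₀, r₁ natural numbers all strictly less than K. Define y₀ = (x₀ + r₀) mod K, y₁ = (x₁ + r₁) mod K, the wrap bit w_Y = (K ≤ y₀ + y₁), the wrap bit w_R = (K ≤ r₀ + r₁), the comparison bit u = ((x₀ + x₁ + r₀ + r₁) mod K < (r₀ + r₁) mod K), and c = w_R XOR u. Then in the ring ZMod (2K) of integers modulo 2K: (y₀ + y₁ + (if w_Y then K else 0)) − (r₀ + r₁ + (if c then K else 0)) = (x₀ + x₁) mod K, where all natural numbers are cast into ZMod (2K). -/

import Mathlib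

private lemma split_mod {K n : ℕ} (hK : 0 < K) (h : n < 2 * K) :
    n = n % K + if K ≤ n then K else 0 := by
  split_ifs with h'
  · have h1 : n % K = n - K := by
      rw [Nat.mod_eq_sub_mod h', Nat.mod_eq_of_lt (by omega)]
    omega
  · rw [Nat.mod_eq_of_lt (by omega)]; omega

/-- Correctness of the modulus conversion protocol MOC: the reconstruction of
the output shares over ℤ_{2K} equals (x₀ + x₁) mod K. -/
theorem moc_correct (K : ℕ) (hK : 0 < K) (x₀ x₁ r₀ r₁ y₀ y₁ : ℕ)
    (hx₀ : x₀ < K) (hx₁ : x₁ < K) (hr₀ : r₀ < K) (hr₁ : r₁ < K)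
    (hy₀ : y₀ = (x₀ + r₀) % K) (hy₁ : y₁ = (x₁ + r₁) % K) :
    ((y₀ : ZMod (2 * K)) + (y₁ : ZMod (2 * K)) +
        (if K ≤ y₀ + y₁ then (K : ZMod (2 * K)) else 0)) -
      ((r₀ : ZMod (2 * K)) + (r₁ : ZMod (2 * K)) +
        (if Xor (K ≤ r₀ + r₁)
            ((x₀ + x₁ + r₀ + r₁) % K < (r₀ + r₁) % K) then (K : ZMod (2 * K)) else 0))
    = (((x₀ + x₁) % K : ℕ) : ZMod (2 * K)) := by
  set a := (x₀ + x₁) % K with ha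
  set r := (r₀ + r₁) % K with hr
  set sK := (x₀ + x₁ + r₀ + r₁) % K with hs
  have hKK : (K : ZMod (2 * K)) + K = 0 := by
    have h0 : ((2 * K : ℕ) : ZMod (2 * K)) = 0 := ZMod.natCast_self _
    push_cast at h0
    linear_combination h0
  have haK : a < K := Nat.mod_lt _ hK
  have hrK : r < K := Nat.mod_lt _ hK
  have hsKK : sK < K := Nat.mod_lt _ hK
  -- y₀ + y₁ splits
  have hyy : (y₀ + y₁) % K = sK := by
    rw [hy₀, hy₁, hs]
    conv_rhs => rw [show x₀ + x₁ + r₀ + r₁ = (x₀ + r₀) + (x₁ + r₁) by ring]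
    rw [Nat.add_mod (x₀ + r₀) (x₁ + r₁)]
  have hy0K : y₀ < K := by rw [hy₀]; exact Nat.mod_lt _ hK
  have hy1K : y₁ < K := by rw [hy₁]; exact Nat.mod_lt _ hK
  have h1 : y₀ + y₁ = sK + if K ≤ y₀ + y₁ then K else 0 := by
    have := split_mod (n := y₀ + y₁) hK (by omega)
    rw [hyy] at this; exact this
  -- r₀ + r₁ splits
  have h3 : r₀ + r₁ = r + if K ≤ r₀ + r₁ then K else 0 := split_mod hK (by omega)
  -- a + r splits, and the u condition
  have har : (a + r) % K = sK := by
    rw [ha, hr, hs]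
    conv_rhs => rw [show x₀ + x₁ + r₀ + r₁ = (x₀ + x₁) + (r₀ + r₁) by ring]
    rw [Nat.add_mod (x₀ + x₁) (r₀ + r₁)]
  have h2 : a + r = sK + if sK < r then K else 0 := by
    have hsp := split_mod (n := a + r) hK (by omega)
    rw [har] at hsp
    rcases le_or_gt K (a + r) with h' | h'
    · rw [if_pos h'] at hsp
      rw [if_pos (by omega)]
      exact hsp
    · rw [if_neg (by omega)] at hsp
      rw [if_neg (by omega)]
      exact hsp
  -- now case split on the three boolean conditions
  have H1 := congrArg (Nat.cast : ℕ → ZMod (2 * K)) h1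
  have H2 := congrArg (Nat.cast : ℕ → ZMod (2 * K)) h2
  have H3 := congrArg (Nat.cast : ℕ → ZMod (2 * K)) h3
  by_cases hY : K ≤ y₀ + y₁ <;> by_cases hR : K ≤ r₀ + r₁ <;> by_cases hu : sK < r <;>
    simp only [hY, hR, hu, Xor, if_true, if_false, not_true, not_false_iff,
      true_and, false_and, and_true, and_false, if_pos, if_neg, true_or, or_false,
      false_or, or_true, iff_true, iff_false] at H1 H2 H3 ⊢ <;>
    push_cast at H1 H2 H3 <;>
    first
      | linear_combination H1 - H2 - H3
      | linear_combination H1 - H2 - H3 + hKK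
      | linear_combination H1 - H2 - H3 - hKK
      | linear_combination H1 - H2 - H3 + 2 * hKK
      | linear_combination H1 - H2 - H3 - 2 * hKK
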